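/- arXiv:2003.09481 — 4 statements merged into one kernel-verified Lean document; each statement's English description precedes it below -/
import Mathlib

section
/- Let f : Fin n → ℕ be strictly increasing with 1 ≤ f(i) ≤ m for all i, and let k = ⌈log₂ m⌉ − 1. Define positions I_r(i) by I_0(i) = i + 1 and I_{r+1}(i) = I_r(i) + 2^(k−r) if I_r(i) + 2^(k−r) ≤ f(i), else I_{r+1}(i) = I_r(i). Then for all r ≤ k+1 and all i, 0 ≤ f(i) − I_r(i) < 2^(k+1−r). -/
/-- Position of an element in Oblivious-Distribute after `r` rounds, starting
at `start`, with destination `dest`: at round `r` hop forward by `2^(k-r)`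
whenever this does not overshoot `dest`. -/
def pos (k dest start : ℕ) : ℕ → ℕ
  | 0 => start
  | r + 1 =>
    if pos k dest start r + 2 ^ (k - r) ≤ dest
    then pos k dest start r + 2 ^ (k - r)
    else pos k dest start r

/-- Main invariant of Oblivious-Distribute: for a strictly increasing
`f : Fin n → ℕ` with `1 ≤ f i ≤ m`, `k = ⌈log₂ m⌉ - 1`, and positions started
at `i + 1` (1-based), we have `0 ≤ f i - I_r(i) < 2^(k+1-r)` for all `r ≤ k+1`. -/
theorem oblivious_distribute_invariant (n m k : ℕ) (f : Fin n → ℕ)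
    (hf : StrictMono f) (hm : ∀ i, 1 ≤ f i ∧ f i ≤ m)
    (hk : k = Nat.clog 2 m - 1) :
    ∀ r ≤ k + 1, ∀ i : Fin n,
      pos k (f i) ((i : ℕ) + 1) r ≤ f i ∧
      f i - pos k (f i) ((i : ℕ) + 1) r < 2 ^ (k + 1 - r) := by
  -- every element starts at or before its destination
  have hstart : ∀ i : Fin n, (i : ℕ) + 1 ≤ f i := by
    have : ∀ v : ℕ, ∀ h : v < n, v + 1 ≤ f ⟨v, h⟩ := by
      intro v
      induction v with
      | zero => intro h; exact (hm ⟨0, h⟩).1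
      | succ w ih =>
        intro h
        have hw : w < n := Nat.lt_of_succ_lt h
        have hlt : f ⟨w, hw⟩ < f ⟨w + 1, h⟩ := hf (by simp [Fin.lt_def])
        have := ih hw
        omega
    intro i; simpa using this i.val i.isLt
  have hm2 : m ≤ 2 ^ (k + 1) := by
    rcases le_or_gt m 1 with h1 | h1
    · calc m ≤ 1 := h1
        _ ≤ 2 ^ (k + 1) := Nat.one_le_two_pow
    · have hc : 1 ≤ Nat.clog 2 m := Nat.clog_pos one_lt_two h1
      have : Nat.clog 2 m ≤ k + 1 := by omega
      exact (Nat.clog_le_iff_le_pow one_lt_two).mp this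
  intro r hr
  induction r with
  | zero =>
    intro i
    refine ⟨hstart i, ?_⟩
    have := (hm i).1
    have := (hm i).2
    simp only [pos, Nat.sub_zero]
    omega
  | succ r ih =>
    intro i
    have hrk : r ≤ k := by omega
    obtain ⟨h1, h2⟩ := ih (by omega) i
    have hexp : k + 1 - r = (k - r) + 1 := by omega
    simp only [pos]
    split_ifs with h
    · constructor
      · exact h
      · rw [hexp] at h2
        have : k + 1 - (r + 1) = k - r := by omega
        rw [this]
        have : 0 < 2 ^ (k - r) := Nat.pow_pos (by norm_num)
        rw [pow_succ] at h2
        omega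
    · push_neg at h
      constructor
      · exact h1
      · have : k + 1 - (r + 1) = k - r := by omega
        rw [this]
        omega
end

section
/- Under the hypotheses of the oblivious-distribute invariant (f strictly increasing, 1 ≤ f(i) ≤ m, positions updated by greedy power-of-two hops from I_0(i) = i+1), the final positions satisfy I_{k+1}(i) = f(i) for every i, where k = ⌈log₂ m⌉ − 1. -/
/-- Correctness of Oblivious-Distribute: the final positions satisfy
`I_{k+1}(i) = f i` for every `i`, where `k = ⌈log₂ m⌉ - 1`. -/
theorem oblivious_distribute_final (n m k : ℕ) (f : Fin n → ℕ)
    (hf : StrictMono f) (hm : ∀ i, 1 ≤ f i ∧ f i ≤ m)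
    (hk : k = Nat.clog 2 m - 1) :
    ∀ i : Fin n, pos k (f i) ((i : ℕ) + 1) (k + 1) = f i := by
  intro i
  -- start ≤ dest : i + 1 ≤ f i
  have hstart : ∀ i : Fin n, (i : ℕ) + 1 ≤ f i := by
    intro ⟨j, hj⟩
    induction j with
    | zero => exact (hm _).1
    | succ j ih =>
      have hj' : j < n := Nat.lt_of_succ_lt hj
      have := hf (show (⟨j, hj'⟩ : Fin n) < ⟨j + 1, hj⟩ by simp [Fin.lt_def])
      have h3 := ih hj'
      simp only [Fin.val_mk] at h3 ⊢
      omega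
  have hle : (i : ℕ) + 1 ≤ f i := hstart i
  -- dest < start + 2^(k+1)
  have hm1 : 1 ≤ m := le_trans (hm i).1 (hm i).2
  have hpow : m ≤ 2 ^ (k + 1) := by
    rcases Nat.lt_or_ge m 2 with h | h
    · calc m ≤ 1 := by omega
        _ ≤ 2 ^ (k + 1) := Nat.one_le_two_pow
    · have hc : 1 ≤ Nat.clog 2 m := Nat.clog_pos one_lt_two h
      have : k + 1 = Nat.clog 2 m := by omega
      rw [this]
      exact Nat.le_pow_clog one_lt_two m
  have hbound : f i < (i : ℕ) + 1 + 2 ^ (k + 1) := by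
    have := (hm i).2
    omega
  -- main invariant
  have key : ∀ r, r ≤ k + 1 →
      pos k (f i) ((i : ℕ) + 1) r ≤ f i ∧
      f i < pos k (f i) ((i : ℕ) + 1) r + 2 ^ (k + 1 - r) := by
    intro r
    induction r with
    | zero => intro _; exact ⟨hle, by simpa [pos] using hbound⟩
    | succ r ih =>
      intro hr
      obtain ⟨h1, h2⟩ := ih (by omega)
      have hrk : r ≤ k := by omega
      have hsplit : 2 ^ (k + 1 - r) = 2 ^ (k - r) + 2 ^ (k - r) := by
        have : k + 1 - r = (k - r) + 1 := by omega
        rw [this, pow_succ]; ring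
      have hsucc : k + 1 - (r + 1) = k - r := by omega
      rw [show pos k (f i) ((i : ℕ) + 1) (r + 1) =
          if pos k (f i) ((i : ℕ) + 1) r + 2 ^ (k - r) ≤ f i
          then pos k (f i) ((i : ℕ) + 1) r + 2 ^ (k - r)
          else pos k (f i) ((i : ℕ) + 1) r from rfl]
      split
      · rename_i h
        refine ⟨h, ?_⟩
        rw [hsucc]
        omega
      · rename_i h
        refine ⟨h1, ?_⟩
        rw [hsucc]
        omega
  obtain ⟨h1, h2⟩ := key (k + 1) le_rfl
  simp at h2
  omega
end

section
/- In the greedy power-of-two routing process with strictly increasing destinations f and I_0(i) = i+1, the positions remain strictly increasing at every round: for all r and all i < j, I_r(i) < I_r(j). Consequently no two non-null elements ever occupy the same cell (collision-freeness). -/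
/-- Closed form for the greedy position. -/
lemma pos_eq (k dest start : ℕ) (hd : dest - start < 2 ^ (k + 1)) :
    ∀ r ≤ k + 1,
      pos k dest start r = start + 2 ^ (k + 1 - r) * ((dest - start) / 2 ^ (k + 1 - r)) := by
  intro r
  induction r with
  | zero =>
    intro _
    simp [pos, Nat.div_eq_of_lt hd]
  | succ r ih =>
    intro hr
    have hrk : r ≤ k := by omega
    have ihr := ih (by omega)
    have hM : k + 1 - r = (k - r) + 1 := by omega
    set M := 2 ^ (k - r) with hMdef
    have hMpos : 0 < M := Nat.pow_pos (by norm_num)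
    have h2M : 2 ^ (k + 1 - r) = 2 * M := by rw [hM]; ring
    set d := dest - start with hddef
    have hk1 : k + 1 - (r + 1) = k - r := by omega
    -- decompose d
    have hdec : d = 2 * M * (d / (2 * M)) + d % (2 * M) := (Nat.div_add_mod d (2*M)).symm
    set a := d / (2 * M) with ha
    set ρ := d % (2 * M) with hρ
    have hρlt : ρ < 2 * M := Nat.mod_lt _ (by omega)
    have hdivM : d / M = 2 * a + ρ / M := by
      conv_lhs => rw [hdec]
      rw [show 2 * M * a + ρ = M * (2 * a) + ρ by ring, Nat.mul_add_div hMpos]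
    rw [pos, ihr, h2M, hk1]
    by_cases hcase : M ≤ ρ
    · have hcond : start + 2 * M * a + M ≤ dest := by
        have hsd : start ≤ dest ∨ dest < start := le_or_gt _ _
        rcases hsd with hsd | hsd
        · have : d = dest - start := rfl
          omega
        · have : d = 0 := by omega
          omega
      have hρM : ρ / M = 1 := by
        rw [Nat.div_eq_of_lt_le] <;> omega
      rw [if_pos (by omega : start + 2 * M * a + M ≤ dest), hdivM, hρM]
      ring
    · have hρM : ρ / M = 0 := Nat.div_eq_of_lt (by omega)
      have hcond : ¬ (start + 2 * M * a + M ≤ dest) := by omega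
      rw [if_neg (by omega : ¬ (start + 2 * M * a + M ≤ dest)), hdivM, hρM]
      ring

/-- For a strictly increasing `f : Fin n → ℕ`, values grow at least linearly. -/
lemma strictMono_gap {n : ℕ} (f : Fin n → ℕ) (hf : StrictMono f) :
    ∀ c : ℕ, ∀ i j : Fin n, (j : ℕ) = (i : ℕ) + c → f i + c ≤ f j := by
  intro c
  induction c with
  | zero =>
    intro i j h
    have : i = j := Fin.ext (by omega)
    simp [this]
  | succ c ih =>
    intro i j h
    have hj' : (i : ℕ) + c < n := by have := j.isLt; omega
    set j' : Fin n := ⟨(i : ℕ) + c, hj'⟩ with hj'def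
    have h1 := ih i j' rfl
    have h2 : f j' < f j := hf (by simp [Fin.lt_def, hj'def]; omega)
    omega

/-- Collision-freeness of Oblivious-Distribute: the positions remain strictly
increasing in the element index at every round, so no two non-null elements
ever occupy the same cell. -/
theorem oblivious_distribute_no_collision (n m k : ℕ) (f : Fin n → ℕ)
    (hf : StrictMono f) (hm : ∀ i, 1 ≤ f i ∧ f i ≤ m)
    (hk : k = Nat.clog 2 m - 1) :
    ∀ r ≤ k + 1, ∀ i j : Fin n, i < j →
      pos k (f i) ((i : ℕ) + 1) r < pos k (f j) ((j : ℕ) + 1) r := by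
  intro r hr i j hij
  -- m ≤ 2^(k+1)
  have hm1 : 1 ≤ m := le_trans (hm i).1 (hm i).2
  have hclog : m ≤ 2 ^ Nat.clog 2 m := Nat.le_pow_clog (by norm_num) m
  have hck : Nat.clog 2 m ≤ k + 1 := by omega
  have hm2 : m ≤ 2 ^ (k + 1) :=
    le_trans hclog (Nat.pow_le_pow_right (by norm_num) hck)
  -- f i ≥ i + 1
  have hpos0 : 0 < n := i.pos
  have hge : ∀ t : Fin n, (t : ℕ) + 1 ≤ f t := by
    intro t
    have := strictMono_gap f hf (t : ℕ) ⟨0, hpos0⟩ t (by simp)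
    have h0 := (hm ⟨0, hpos0⟩).1
    omega
  have hgi := hge i
  have hgj := hge j
  have hgap := strictMono_gap f hf ((j : ℕ) - (i : ℕ)) i j (by
    have : (i : ℕ) < j := hij
    omega)
  have hdi : f i - ((i : ℕ) + 1) < 2 ^ (k + 1) := by
    have := (hm i).2; omega
  have hdj : f j - ((j : ℕ) + 1) < 2 ^ (k + 1) := by
    have := (hm j).2; omega
  rw [pos_eq k (f i) ((i : ℕ) + 1) hdi r hr, pos_eq k (f j) ((j : ℕ) + 1) hdj r hr]
  have hij' : (i : ℕ) < j := hij
  have hdle : f i - ((i : ℕ) + 1) ≤ f j - ((j : ℕ) + 1) := by omega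
  have := Nat.mul_le_mul_left (2 ^ (k + 1 - r)) (Nat.div_le_div_right (c := 2 ^ (k + 1 - r)) hdle)
  omega
end

section
/- Let A be an array of length m over Option α where, for the offsets f(i) = 1 + Σ_{j<i} g(j), cell f(i) holds value xᵢ for each i with g(i) > 0 and all other cells hold none. Then the forward fill pass (replacing each none by the last previously seen some value) produces the array consisting of g(x₁) copies of x₁, followed by g(x₂) copies of x₂, and so on. -/
/-- The forward fill pass: replace each `none` by the last previously seen
`some` value. -/
def fillPass {α : Type*} : Option α → List (Option α) → List (Option α)
  | _, [] => []
  | px, none :: t => px :: fillPass px t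
  | _, some x :: t => some x :: fillPass (some x) t

lemma fillPass_replicate_none {α : Type*} (px : Option α) (k : ℕ) (t : List (Option α)) :
    fillPass px (List.replicate k none ++ t) = List.replicate k px ++ fillPass px t := by
  induction k with
  | zero => simp
  | succ k ih => simp [List.replicate_succ, fillPass, ih]

lemma fillPass_pairs {α : Type*} (L : List (α × ℕ)) (px : Option α) :
    fillPass px (L.flatMap fun p =>
        if p.2 = 0 then [] else some p.1 :: List.replicate (p.2 - 1) none) =
      L.flatMap fun p => List.replicate p.2 (some p.1) := by
  induction L generalizing px with
  | nil => simp [fillPass]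
  | cons a L ih =>
    by_cases h : a.2 = 0
    · simp [h, ih]
    · obtain ⟨k, hk⟩ := Nat.exists_eq_succ_of_ne_zero h
      simp only [List.flatMap_cons, h, if_neg, List.cons_append, fillPass,
        fillPass_replicate_none, ih, hk]
      simp [List.replicate_succ, fillPass, fillPass_replicate_none, ih]

/-- Correctness of Oblivious-Expand's fill pass: on the distributed array in
which cell `f i = 1 + Σ_{j<i} g j` holds `x i` (for `g i > 0`) and all other
cells hold `none`, the fill pass produces `g x₁` copies of `x₁` followed by
`g x₂` copies of `x₂`, and so on. -/
theorem fillPass_expand {α : Type*} (n : ℕ) (g : Fin n → ℕ) (x : Fin n → α) :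
    fillPass none
        ((List.finRange n).flatMap fun i =>
          if g i = 0 then [] else some (x i) :: List.replicate (g i - 1) none) =
      (List.finRange n).flatMap fun i => List.replicate (g i) (some (x i)) := by
  have := fillPass_pairs ((List.finRange n).map fun i => (x i, g i)) (none : Option α)
  simpa [List.flatMap_map] using this
end
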